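/- Let g ≥ 1 and let D_g^{(2c)} be the Verlinde polynomial as above. Writing D_g^{(2c)} = ∑_j φ_j(c) p^j, the nonzero φ_j occur exactly for j ∈ {g−1, g+1, g+3, …, 3g−3} ∪ {g}, and each such φ_j is a polynomial in c of degree exactly 3g−2−j. -/

import Mathlib

open PowerSeries

/-- The even power series `s(at) = sinh(at)/(at) = ∑_k (at)^{2k}/(2k+1)!`. -/
noncomputable def sSeries (a : ℚ) : PowerSeries ℚ :=
  PowerSeries.mk fun k => if Even k then a ^ k / (k + 1).factorial else 0

/-- The power series `2pt/(e^{2pt}−1) = ∑_k B_k (2p)^k t^k / k!`. -/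
noncomputable def bSeries (p : ℚ) : PowerSeries ℚ :=
  PowerSeries.mk fun k => bernoulli k * (2 * p) ^ k / k.factorial

/-- The residue at `t = 0` of `(2pt/(e^{2pt}−1)) · (s((2c+1)t)/s(t)^{2g−1}) · dt/t^{2g−1}`. -/
noncomputable def resTerm (g : ℕ) (p c : ℚ) : ℚ :=
  PowerSeries.coeff (2 * g - 2) (bSeries p * sSeries (2 * c + 1) * (sSeries 1 ^ (2 * g - 1))⁻¹)

/-- The Verlinde number `D_g^{(2c)}` given by the residue formula. -/
noncomputable def Dval (g : ℕ) (p c : ℚ) : ℚ :=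
  ((-p) ^ g / 2) * ((4 : ℚ) ^ (1 - (g : ℤ)) * ((2 * c + 1) / p) * resTerm g p c
    - (descPochhammer ℚ (2 * g - 2)).eval (c + g - 1) / (2 * g - 2).factorial)

/-! ### Auxiliary lemmas -/

open Complex in
lemma bernoulli_two_mul_ne_zero (i : ℕ) : bernoulli (2 * i) ≠ 0 := by
  rcases Nat.eq_zero_or_pos i with h | h
  · simp [h]
  · have hz := riemannZeta_two_mul_nat (k := i) (by omega)
    have hne : riemannZeta (2 * i) ≠ 0 := by
      apply riemannZeta_ne_zero_of_one_lt_re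
      simp
      exact_mod_cast by omega
    intro hb
    rw [hb] at hz
    simp at hz
    exact hne (by rw [hz])

def EvenSeries (φ : PowerSeries ℚ) : Prop := ∀ n, ¬ Even n → PowerSeries.coeff n φ = 0

lemma evenSeries_mul {φ ψ : PowerSeries ℚ} (hφ : EvenSeries φ) (hψ : EvenSeries ψ) :
    EvenSeries (φ * ψ) := by
  intro n hn
  rw [PowerSeries.coeff_mul]
  apply Finset.sum_eq_zero
  rintro ⟨a, b⟩ hab
  replace hab : a + b = n := by simpa using hab
  by_cases ha : Even a
  · have : ¬ Even b := fun hb => hn (hab ▸ ha.add hb)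
    simp [hψ b this]
  · simp [hφ a ha]

lemma evenSeries_pow {φ : PowerSeries ℚ} (hφ : EvenSeries φ) (k : ℕ) : EvenSeries (φ ^ k) := by
  induction k with
  | zero => intro n hn; rw [pow_zero, PowerSeries.coeff_one]; simp; rintro rfl; exact hn (by simp)
  | succ k ih => rw [pow_succ]; exact evenSeries_mul ih hφ

lemma evenSeries_inv {φ : PowerSeries ℚ} (hφ : EvenSeries φ) : EvenSeries φ⁻¹ := by
  intro n
  induction n using Nat.strong_induction_on with
  | _ n ih =>
    intro hn
    have hn0 : n ≠ 0 := by rintro rfl; exact hn (by simp)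
    rw [PowerSeries.coeff_inv, if_neg hn0]
    convert mul_zero _
    apply Finset.sum_eq_zero
    rintro ⟨a, b⟩ hab
    replace hab : a + b = n := by simpa using hab
    by_cases hb : b < n
    · rw [if_pos hb]
      by_cases ha : Even a
      · have : ¬ Even b := fun h => hn (hab ▸ ha.add h)
        rw [ih b hb this, mul_zero]
      · rw [hφ a ha, zero_mul]
    · rw [if_neg hb]

lemma evenSeries_sSeries (a : ℚ) : EvenSeries (sSeries a) := by
  intro n hn; simp [sSeries, hn]

lemma constantCoeff_sSeries (a : ℚ) : PowerSeries.constantCoeff (sSeries a) = 1 := by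
  simp [sSeries, ← PowerSeries.coeff_zero_eq_constantCoeff]

noncomputable def uC (g : ℕ) : ℕ → ℚ := fun n => PowerSeries.coeff n ((sSeries 1 ^ (2*g-1))⁻¹)

lemma uC_zero (g : ℕ) : uC g 0 = 1 := by
  unfold uC
  rw [PowerSeries.coeff_zero_eq_constantCoeff, PowerSeries.constantCoeff_inv, map_pow,
    constantCoeff_sSeries, one_pow, inv_one]

noncomputable def Qpoly (g i : ℕ) : Polynomial ℚ :=
  ∑ m ∈ Finset.range (2*g-2-2*i+1), if Even m then
    Polynomial.C ((1 / ((m:ℕ)+1).factorial) * uC g (2*g-2-2*i-m)) * (2*Polynomial.X+1)^m else 0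

lemma sum_range_even (f : ℕ → ℚ) (g : ℕ) (h : ∀ k < 2*g+1, ¬ Even k → f k = 0) :
    ∑ k ∈ Finset.range (2*g+1), f k = ∑ i ∈ Finset.range (g+1), f (2*i) := by
  induction g with
  | zero => simp
  | succ g ih =>
    have h1 : 2*(g+1)+1 = (2*g+1) + 1 + 1 := by ring
    rw [h1, Finset.sum_range_succ, Finset.sum_range_succ,
      ih (fun k hk hk2 => h k (by omega) hk2), Finset.sum_range_succ (n := g+1),
      h (2*g+1) (by omega) (by simp [parity_simps]), add_zero]
    congr 2 <;> omega

lemma resTerm_eq (g : ℕ) (hg : 1 ≤ g) (p c : ℚ) :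
    resTerm g p c = ∑ i ∈ Finset.range g,
      bernoulli (2*i) * 2^(2*i) / (2*i).factorial * p^(2*i) * (Qpoly g i).eval c := by
  have hW : ∀ r, PowerSeries.coeff r (sSeries (2*c+1) * (sSeries 1 ^ (2*g-1))⁻¹)
      = ∑ m ∈ Finset.range (r+1),
        (if Even m then (2*c+1)^m / ((m:ℕ)+1).factorial else 0) * uC g (r - m) := by
    intro r
    rw [PowerSeries.coeff_mul, Finset.Nat.sum_antidiagonal_eq_sum_range_succ_mk]
    refine Finset.sum_congr rfl fun m _ => ?_
    rw [sSeries, PowerSeries.coeff_mk]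
    rfl
  have hWodd : ∀ r, ¬ Even r → PowerSeries.coeff r
      (sSeries (2*c+1) * (sSeries 1 ^ (2*g-1))⁻¹) = 0 :=
    evenSeries_mul (evenSeries_sSeries _) (evenSeries_inv (evenSeries_pow (evenSeries_sSeries 1) _))
  have key : resTerm g p c = ∑ k ∈ Finset.range (2*g-2+1),
      (bernoulli k * (2*p)^k / k.factorial) *
        PowerSeries.coeff (2*g-2-k) (sSeries (2*c+1) * (sSeries 1 ^ (2*g-1))⁻¹) := by
    rw [resTerm, mul_assoc, PowerSeries.coeff_mul, Finset.Nat.sum_antidiagonal_eq_sum_range_succ_mk]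
    refine Finset.sum_congr rfl fun k _ => ?_
    rw [bSeries, PowerSeries.coeff_mk]
  obtain ⟨q, rfl⟩ : ∃ q, g = q + 1 := ⟨g - 1, by omega⟩
  have h2 : 2*(q+1)-2+1 = 2*q+1 := by omega
  rw [key, h2, sum_range_even _ q (fun k hk1 hk => by
      rw [hWodd (2*(q+1)-2-k) ?_, mul_zero]
      intro hev
      obtain ⟨s, hs⟩ := Nat.not_even_iff_odd.mp hk
      obtain ⟨t, ht⟩ := hev
      omega)]
  refine Finset.sum_congr rfl fun i hi => ?_
  rw [hW]
  have hd : 2*(q+1)-2-2*i = 2*q-2*i := by omega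
  rw [hd]
  have : (Qpoly (q+1) i).eval c = ∑ m ∈ Finset.range (2*q-2*i+1),
      (if Even m then (2*c+1)^m / ((m:ℕ)+1).factorial else 0) * uC (q+1) (2*q-2*i - m) := by
    rw [Qpoly]
    have hd2 : 2*(q+1)-2-2*i = 2*q-2*i := by omega
    rw [hd2, Polynomial.eval_finset_sum]
    refine Finset.sum_congr rfl fun m _ => ?_
    split
    · simp only [Polynomial.eval_mul, Polynomial.eval_C, Polynomial.eval_pow,
        Polynomial.eval_add, Polynomial.eval_one, Polynomial.eval_ofNat, Polynomial.eval_X]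
      ring
    · simp
  rw [this, mul_pow]
  ring

/-! ### Degree computations -/

lemma coeff_pow_2X1 (d : ℕ) : ((2*Polynomial.X+1 : Polynomial ℚ)^d).coeff d = 2^d := by
  compute_degree!

lemma natDegree_2X1 : ((2*Polynomial.X+1 : Polynomial ℚ)).natDegree = 1 := by
  compute_degree!

lemma term_natDegree_le (a : ℚ) (m : ℕ) :
    ((Polynomial.C a) * (2*Polynomial.X+1)^m : Polynomial ℚ).natDegree ≤ m := by
  refine Polynomial.natDegree_mul_le.trans ?_
  rw [Polynomial.natDegree_C, zero_add]
  refine Polynomial.natDegree_pow_le.trans ?_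
  rw [natDegree_2X1, mul_one]

lemma Qpoly_coeff_top (g i : ℕ) (hg : 1 ≤ g) (hi : i < g) :
    (Qpoly g i).coeff (2*g-2-2*i) = 2^(2*g-2-2*i) / (2*g-2-2*i+1).factorial := by
  rw [Qpoly, Polynomial.finset_sum_coeff, Finset.sum_eq_single (2*g-2-2*i)]
  · rw [if_pos ⟨g-1-i, by omega⟩, Nat.sub_self, uC_zero, Polynomial.coeff_C_mul, coeff_pow_2X1]
    ring
  · intro m hm hne
    have hmlt : m < 2*g-2-2*i := by
      have := Finset.mem_range.mp hm; omega
    split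
    · exact Polynomial.coeff_eq_zero_of_natDegree_lt (lt_of_le_of_lt (term_natDegree_le _ _) hmlt)
    · simp
  · intro h
    exact absurd (Finset.mem_range.mpr (by omega)) h

lemma Qpoly_natDegree_le (g i : ℕ) : (Qpoly g i).natDegree ≤ 2*g-2-2*i := by
  refine Polynomial.natDegree_sum_le_of_forall_le _ _ fun m hm => ?_
  split
  · exact (term_natDegree_le _ _).trans (by have := Finset.mem_range.mp hm; omega)
  · simp

lemma Qpoly_coeff_top_ne (g i : ℕ) (hg : 1 ≤ g) (hi : i < g) :
    (Qpoly g i).coeff (2*g-2-2*i) ≠ 0 := by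
  rw [Qpoly_coeff_top g i hg hi]
  positivity

lemma Qpoly_ne_zero (g i : ℕ) (hg : 1 ≤ g) (hi : i < g) : Qpoly g i ≠ 0 := fun h => by
  have := Qpoly_coeff_top_ne g i hg hi
  rw [h] at this
  simp at this

lemma Qpoly_natDegree (g i : ℕ) (hg : 1 ≤ g) (hi : i < g) :
    (Qpoly g i).natDegree = 2*g-2-2*i :=
  le_antisymm (Qpoly_natDegree_le g i)
    (Polynomial.le_natDegree_of_ne_zero (Qpoly_coeff_top_ne g i hg hi))

/-- The coefficient polynomial `φ_g` coming from the binomial term. -/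
noncomputable def Pg (g : ℕ) : Polynomial ℚ :=
  Polynomial.C ((-1:ℚ)^(g+1) / (2*(2*g-2).factorial)) *
    ((descPochhammer ℚ (2*g-2)).comp (Polynomial.X + Polynomial.C ((g:ℚ)-1)))

lemma Pg_const_ne (g : ℕ) : ((-1:ℚ)^(g+1) / (2*(2*g-2).factorial)) ≠ 0 :=
  div_ne_zero (pow_ne_zero _ (by norm_num)) (by positivity)

lemma comp_monic (g : ℕ) :
    ((descPochhammer ℚ (2*g-2)).comp (Polynomial.X + Polynomial.C ((g:ℚ)-1))).Monic :=
  (monic_descPochhammer ℚ _).comp (Polynomial.monic_X_add_C _)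
    (by rw [Polynomial.natDegree_X_add_C]; norm_num)

lemma Pg_ne_zero (g : ℕ) : Pg g ≠ 0 :=
  mul_ne_zero (by simpa using Pg_const_ne g) (comp_monic g).ne_zero

lemma Pg_natDegree (g : ℕ) : (Pg g).natDegree = 2*g-2 := by
  rw [Pg, Polynomial.natDegree_mul (by simpa using Pg_const_ne g) (comp_monic g).ne_zero,
    Polynomial.natDegree_C, Polynomial.natDegree_comp, descPochhammer_natDegree,
    Polynomial.natDegree_X_add_C]
  ring

/-- The coefficient polynomial `φ_{g-1+2i}`. -/
noncomputable def Qf (g i : ℕ) : Polynomial ℚ :=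
  Polynomial.C ((-1:ℚ)^g / 2 * (4:ℚ)^(1-(g:ℤ)) * (bernoulli (2*i) * 2^(2*i) / (2*i).factorial)) *
    ((2*Polynomial.X+1) * Qpoly g i)

lemma Qf_const_ne (g i : ℕ) :
    ((-1:ℚ)^g / 2 * (4:ℚ)^(1-(g:ℤ)) * (bernoulli (2*i) * 2^(2*i) / (2*i).factorial)) ≠ 0 := by
  refine mul_ne_zero (mul_ne_zero ?_ ?_) ?_
  · exact div_ne_zero (pow_ne_zero _ (by norm_num)) (by norm_num)
  · exact zpow_ne_zero _ (by norm_num)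
  · exact div_ne_zero (mul_ne_zero (bernoulli_two_mul_ne_zero i) (by positivity)) (by positivity)

lemma twoX1_ne_zero : (2*Polynomial.X+1 : Polynomial ℚ) ≠ 0 := fun h => by
  have := congrArg (Polynomial.coeff · 0) h
  simp at this

lemma Qf_ne_zero (g i : ℕ) (hg : 1 ≤ g) (hi : i < g) : Qf g i ≠ 0 :=
  mul_ne_zero (by simpa using Qf_const_ne g i)
    (mul_ne_zero twoX1_ne_zero (Qpoly_ne_zero g i hg hi))

lemma Qf_natDegree (g i : ℕ) (hg : 1 ≤ g) (hi : i < g) :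
    (Qf g i).natDegree = 2*g-1-2*i := by
  rw [Qf, Polynomial.natDegree_mul (by simpa using Qf_const_ne g i)
      (mul_ne_zero twoX1_ne_zero (Qpoly_ne_zero g i hg hi)),
    Polynomial.natDegree_C,
    Polynomial.natDegree_mul twoX1_ne_zero (Qpoly_ne_zero g i hg hi),
    natDegree_2X1, Qpoly_natDegree g i hg hi]
  omega

/-- The full family of coefficient polynomials. -/
noncomputable def phif (g : ℕ) (j : ℕ) : Polynomial ℚ :=
  (if j = g then Pg g else 0) +
    ∑ i ∈ Finset.range g, if j = g-1+2*i then Qf g i else 0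

lemma phif_of_mem (g i : ℕ) (hg : 1 ≤ g) (hi : i < g) : phif g (g-1+2*i) = Qf g i := by
  rw [phif, if_neg (by omega), zero_add, Finset.sum_eq_single i]
  · rw [if_pos rfl]
  · intro b _ hb
    rw [if_neg (by omega)]
  · intro h
    exact absurd (Finset.mem_range.mpr hi) h

lemma phif_g (g : ℕ) (hg : 1 ≤ g) : phif g g = Pg g := by
  rw [phif, if_pos rfl, Finset.sum_eq_zero (fun i hi => by rw [if_neg (by omega)]), add_zero]

lemma phif_zero (g j : ℕ) (hg : 1 ≤ g) (h1 : ¬ ∃ i < g, g-1+2*i = j) (h2 : j ≠ g) :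
    phif g j = 0 := by
  rw [phif, if_neg h2, Finset.sum_eq_zero (fun i hi => by
    rw [if_neg (fun hc => h1 ⟨i, Finset.mem_range.mp hi, hc.symm⟩)]), add_zero]

lemma eval_aeval (v : Fin 2 → ℚ) (q : Polynomial ℚ) :
    MvPolynomial.eval v (Polynomial.aeval (MvPolynomial.X 1) q) = Polynomial.eval (v 1) q := by
  rw [Polynomial.aeval_def, Polynomial.hom_eval₂,
    Subsingleton.elim ((MvPolynomial.eval v).comp (algebraMap ℚ (MvPolynomial (Fin 2) ℚ)))
      (RingHom.id ℚ), MvPolynomial.eval_X]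
  rfl

/-- Writing `D_g^{(2c)} = ∑_j φ_j(c) p^j`, the nonzero `φ_j` occur exactly for
`j ∈ {g−1, g+1, g+3, …, 3g−3} ∪ {g}`, and each such `φ_j` has degree exactly
`3g−2−j` in `c`. -/
theorem verlinde_phi_degrees (g : ℕ) (hg : 1 ≤ g) :
    ∃ (D : MvPolynomial (Fin 2) ℚ) (φ : ℕ → Polynomial ℚ),
      (∀ p c : ℚ, p ≠ 0 → MvPolynomial.eval ![p, c] D = Dval g p c) ∧
      D = ∑ j ∈ Finset.range (3 * g - 1),
            Polynomial.aeval (MvPolynomial.X 1) (φ j) * MvPolynomial.X 0 ^ j ∧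
      (∀ j : ℕ, φ j ≠ 0 ↔ (j ∈ (Finset.range g).image (fun i => g - 1 + 2 * i) ∨ j = g)) ∧
      (∀ j : ℕ, (j ∈ (Finset.range g).image (fun i => g - 1 + 2 * i) ∨ j = g) →
        (φ j).natDegree = 3 * g - 2 - j) := by
  refine ⟨_, phif g, ?_, rfl, ?_, ?_⟩
  · intro p c hp
    rw [map_sum]
    have hLHS : ∀ j, MvPolynomial.eval ![p, c]
        (Polynomial.aeval (MvPolynomial.X 1) (phif g j) * MvPolynomial.X 0 ^ j)
        = (phif g j).eval c * p ^ j := by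
      intro j
      rw [map_mul, map_pow, MvPolynomial.eval_X, eval_aeval]
      norm_num
    rw [Finset.sum_congr rfl (fun j _ => hLHS j)]
    have step1 : ∑ j ∈ Finset.range (3*g-1), (phif g j).eval c * p ^ j
        = (Pg g).eval c * p ^ g +
          ∑ i ∈ Finset.range g, (Qf g i).eval c * p ^ (g-1+2*i) := by
      simp only [phif, Polynomial.eval_add, Polynomial.eval_finset_sum, add_mul,
        Finset.sum_add_distrib]
      congr 1
      · have hmemg : g ∈ Finset.range (3*g-1) := Finset.mem_range.mpr (by omega)
        simp only [apply_ite (Polynomial.eval c), Polynomial.eval_zero, ite_mul, zero_mul]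
        rw [Finset.sum_ite_eq' (Finset.range (3*g-1)) g (fun j => (Pg g).eval c * p ^ j)]
        simp [hmemg]
      · simp only [Finset.sum_mul, apply_ite (Polynomial.eval c), Polynomial.eval_zero,
          ite_mul, zero_mul]
        rw [Finset.sum_comm]
        refine Finset.sum_congr rfl fun i hi => ?_
        have him : g-1+2*i ∈ Finset.range (3*g-1) := by
          rw [Finset.mem_range]
          have := Finset.mem_range.mp hi
          omega
        rw [Finset.sum_ite_eq' (Finset.range (3*g-1)) (g-1+2*i)
          (fun j => (Qf g i).eval c * p ^ j)]
        simp [him]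
    rw [step1, Dval, resTerm_eq g hg p c, mul_sub, sub_eq_add_neg,
      add_comm ((-p) ^ g / 2 * ((4:ℚ) ^ (1 - (g:ℤ)) * ((2 * c + 1) / p) * _))]
    congr 1
    · -- binomial part
      rw [Pg, Polynomial.eval_mul, Polynomial.eval_C, Polynomial.eval_comp,
        Polynomial.eval_add, Polynomial.eval_X, Polynomial.eval_C]
      have harg : c + ((g:ℚ) - 1) = c + g - 1 := by ring
      rw [harg, neg_pow, pow_succ]
      have hF : ((2*g-2).factorial : ℚ) ≠ 0 := by positivity
      field_simp
      ring
    · -- main sum part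
      rw [Finset.mul_sum, Finset.mul_sum]
      refine Finset.sum_congr rfl fun i hi => ?_
      have hps : p ^ (g-1+2*i) = p ^ g * p ^ (2*i) / p := by
        rw [eq_div_iff hp, ← pow_succ, ← pow_add]
        congr 1
        omega
      rw [Qf, Polynomial.eval_mul, Polynomial.eval_C, Polynomial.eval_mul,
        Polynomial.eval_add, Polynomial.eval_one, Polynomial.eval_mul, Polynomial.eval_ofNat,
        Polynomial.eval_X, hps, neg_pow]
      field_simp
      ring
  · intro j
    constructor
    · intro hne
      by_contra hcon
      push_neg at hcon
      obtain ⟨hc1, hc2⟩ := hcon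
      refine hne (phif_zero g j hg ?_ hc2)
      rintro ⟨i, hi, hij⟩
      exact hc1 (Finset.mem_image.mpr ⟨i, Finset.mem_range.mpr hi, hij⟩)
    · rintro (hmem | hje)
      · obtain ⟨i, hi, rfl⟩ := Finset.mem_image.mp hmem
        rw [phif_of_mem g i hg (Finset.mem_range.mp hi)]
        exact Qf_ne_zero g i hg (Finset.mem_range.mp hi)
      · rw [hje, phif_g g hg]
        exact Pg_ne_zero g
  · rintro j (hmem | hje)
    · obtain ⟨i, hi, rfl⟩ := Finset.mem_image.mp hmem
      have hi' := Finset.mem_range.mp hi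
      rw [phif_of_mem g i hg hi', Qf_natDegree g i hg hi']
      omega
    · rw [hje, phif_g g hg, Pg_natDegree]
      omega
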